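/- Let M be a Riemannian manifold, V a conformal vector field with L_V g = λ g, and γ : I → M a unit-speed curve satisfying ∇_{γ'}γ' = q · (V ×γ') in an oriented 3-dimensional M. Then d/ds ⟨V(γ(s)), γ'(s)⟩ = λ(γ(s))/2, i.e., ⟨V(γ(s)),γ'(s)⟩ = (1/2)∫ λ(γ(t)) dt + const. -/

import Mathlib

def dot3 (u v : Fin 3 → ℝ) : ℝ := ∑ i, u i * v i

lemma dot3_comm (u v : Fin 3 → ℝ) : dot3 u v = dot3 v u := by
  unfold dot3; exact Finset.sum_congr rfl (fun i _ => mul_comm _ _)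

lemma dot3_cross (u v : Fin 3 → ℝ) : dot3 u (crossProduct u v) = 0 := by
  simp [dot3, crossProduct, Fin.sum_univ_three]
  ring

/-- For a unit-speed conformal trajectory `γ` of a conformal vector field `V`
(with `L_V g = λ g`, i.e. `⟨∇ᵤV,w⟩ + ⟨u,∇_wV⟩ = λ⟨u,w⟩`) in the oriented
Riemannian 3-manifold `ℝ³`, one has `d/ds ⟨V(γ(s)), γ'(s)⟩ = λ(γ(s))/2`. -/
theorem stmt16 (I : Set ℝ) (hI : IsOpen I)
    (γ g g' : ℝ → (Fin 3 → ℝ))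
    (V : (Fin 3 → ℝ) → (Fin 3 → ℝ))
    (V' : (Fin 3 → ℝ) → ((Fin 3 → ℝ) →L[ℝ] (Fin 3 → ℝ)))
    (lam : (Fin 3 → ℝ) → ℝ) (q : ℝ)
    (hV : ∀ x, HasFDerivAt V (V' x) x)
    (hconf : ∀ x u w, dot3 (V' x u) w + dot3 u (V' x w) = lam x * dot3 u w)
    (hd1 : ∀ s ∈ I, HasDerivAt γ (g s) s)
    (hd2 : ∀ s ∈ I, HasDerivAt g (g' s) s)
    (hunit : ∀ s ∈ I, dot3 (g s) (g s) = 1)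
    (heq : ∀ s ∈ I, g' s = q • crossProduct (V (γ s)) (g s)) :
    ∀ s ∈ I, HasDerivAt (fun t => dot3 (V (γ t)) (g t)) (lam (γ s) / 2) s := by
  intro s hs
  -- derivative of V ∘ γ
  have hVγ : HasDerivAt (fun t => V (γ t)) (V' (γ s) (g s)) s :=
    (hV (γ s)).comp_hasDerivAt s (hd1 s hs)
  have hkey : HasDerivAt (fun t => dot3 (V (γ t)) (g t))
      (dot3 (V' (γ s) (g s)) (g s) + dot3 (V (γ s)) (g' s)) s := by
    have : HasDerivAt (fun t => ∑ i, V (γ t) i * g t i)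
        (∑ i, (V' (γ s) (g s) i * g s i + V (γ s) i * g' s i)) s := by
      apply HasDerivAt.fun_sum
      intro i _
      exact (hasDerivAt_pi.mp hVγ i).mul (hasDerivAt_pi.mp (hd2 s hs) i)
    simpa [dot3, Finset.sum_add_distrib] using this
  have h2 : dot3 (V (γ s)) (g' s) = 0 := by
    rw [heq s hs]
    have : dot3 (V (γ s)) (q • crossProduct (V (γ s)) (g s))
        = q * dot3 (V (γ s)) (crossProduct (V (γ s)) (g s)) := by
      simp [dot3, Finset.mul_sum]
      exact Finset.sum_congr rfl fun i _ => by ring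
    rw [this, dot3_cross, mul_zero]
  have h1 : dot3 (V' (γ s) (g s)) (g s) = lam (γ s) / 2 := by
    have hc := hconf (γ s) (g s) (g s)
    rw [hunit s hs, mul_one] at hc
    rw [dot3_comm (g s)] at hc
    linarith
  rw [h1, h2, add_zero] at hkey
  exact hkey
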